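/- Continuity estimate for the lifted strict product: let K ⊂ ℂ be compact with K ∩ ({1/k : k ∈ ℕ} ∪ {0}) = ∅, and let c, C ≥ 1 be constants with c^m m! ≤ |(1/ℏ)^(↓m)| ≤ C^m m! for all ℏ ∈ K and m ∈ ℕ₀. Then for all multiindices P,Q,R,S ∈ ℕ₀^{1+n} with |P|=|Q|, |R|=|S| and all r ≥ 1: ∑_{T ≤ min{Q,R}} |(1/ℏ)^(↓|Q+R-T|)| / (|(1/ℏ)^(↓|Q|)| · |(1/ℏ)^(↓|R|)|) · T! C(Q,T) C(R,T) r^{|P+Q+R+S-2T|} ≤ (8 c^{-1} C r)^{|P+Q+R+S|}. -/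

import Mathlib

open scoped BigOperators


private lemma aux_choose_le_two_pow (n k : ℕ) : n.choose k ≤ 2 ^ n := by
  rcases le_or_gt k n with hk | hk
  · calc n.choose k ≤ ∑ i ∈ Finset.range (n + 1), n.choose i :=
        Finset.single_le_sum (fun _ _ => Nat.zero_le _)
          (Finset.mem_range.mpr (Nat.lt_succ_of_le hk))
    _ = 2 ^ n := Nat.sum_range_choose n
  · rw [Nat.choose_eq_zero_of_lt hk]; exact Nat.zero_le _

/-- Continuity estimate for the lifted strict product: let
`K ⊂ ℂ` be compact and disjoint from `{1/k : k ∈ ℕ} ∪ {0}`, and let `c, C ≥ 1` satisfy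
`c^m m! ≤ |(1/ℏ)^(↓m)| ≤ C^m m!` for all `ℏ ∈ K`, `m ∈ ℕ₀`.  Then for all multiindices
`P,Q,R,S ∈ ℕ₀^{1+n}` with `|P| = |Q|`, `|R| = |S|` and all `r ≥ 1`,
`∑_{T ≤ min{Q,R}} |(1/ℏ)^(↓|Q+R-T|)| / (|(1/ℏ)^(↓|Q|)| |(1/ℏ)^(↓|R|)|)
    · T! C(Q,T) C(R,T) · r^{|P+Q+R+S|-2|T|} ≤ (8 c⁻¹ C r)^{|P+Q+R+S|}`. -/
theorem strict_product_continuity_estimate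
    (n : ℕ) (K : Set ℂ) (hK : IsCompact K)
    (hKΩ : ∀ h ∈ K, h ≠ 0 ∧ ∀ k : ℕ, 1 ≤ k → h ≠ 1 / (k : ℂ))
    (c C : ℝ) (hc : 1 ≤ c) (hC : 1 ≤ C)
    (hlow : ∀ h ∈ K, ∀ m : ℕ,
      c ^ m * m.factorial ≤ norm (∏ j ∈ Finset.range m, (h⁻¹ - (j : ℂ))))
    (hhigh : ∀ h ∈ K, ∀ m : ℕ,
      norm (∏ j ∈ Finset.range m, (h⁻¹ - (j : ℂ))) ≤ C ^ m * m.factorial)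
    (P Q R S : Fin (n + 1) → ℕ)
    (hPQ : ∑ k, P k = ∑ k, Q k) (hRS : ∑ k, R k = ∑ k, S k)
    (r : ℝ) (hr : 1 ≤ r) (h : ℂ) (hh : h ∈ K) :
    ∑ T ∈ Finset.Iic (fun k => min (Q k) (R k) : Fin (n + 1) → ℕ),
      norm (∏ j ∈ Finset.range (∑ k, (Q k + R k - T k)), (h⁻¹ - (j : ℂ)))
          / (norm (∏ j ∈ Finset.range (∑ k, Q k), (h⁻¹ - (j : ℂ)))
              * norm (∏ j ∈ Finset.range (∑ k, R k), (h⁻¹ - (j : ℂ))))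
        * (∏ k, ((T k).factorial : ℝ)) * (∏ k, ((Q k).choose (T k) : ℝ))
        * (∏ k, ((R k).choose (T k) : ℝ))
        * r ^ (∑ k, (P k + Q k + R k + S k) - 2 * ∑ k, T k)
      ≤ (8 * c⁻¹ * C * r) ^ (∑ k, (P k + Q k + R k + S k)) := by
  have hc0 : (0:ℝ) < c := lt_of_lt_of_le one_pos hc
  have hC0 : (0:ℝ) < C := lt_of_lt_of_le one_pos hC
  have hr0 : (0:ℝ) < r := lt_of_lt_of_le one_pos hr
  set q := ∑ k, Q k with hq
  set ρ := ∑ k, R k with hρ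
  set N := ∑ k, (P k + Q k + R k + S k) with hNdef
  have hN : N = 2 * (q + ρ) := by
    simp only [hNdef, hq, hρ, Finset.sum_add_distrib]
    omega
  have hcC : c ≤ C := by
    have h1 := hlow h hh 1
    have h2 := hhigh h hh 1
    simp only [pow_one, Nat.factorial_one, Nat.cast_one, mul_one] at h1 h2
    linarith
  have htwo : ∀ a b : ℕ, (2:ℝ) ^ (a + b) * 2 ^ a * 2 ^ b = 4 ^ (a + b) := by
    intro a b
    rw [show (4:ℝ) = 2 ^ 2 by norm_num, ← pow_mul, ← pow_add, ← pow_add]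
    congr 1; omega
  -- per-element bound
  have key : ∀ T ∈ Finset.Iic (fun k => min (Q k) (R k) : Fin (n + 1) → ℕ),
      norm (∏ j ∈ Finset.range (∑ k, (Q k + R k - T k)), (h⁻¹ - (j : ℂ)))
          / (norm (∏ j ∈ Finset.range q, (h⁻¹ - (j : ℂ)))
              * norm (∏ j ∈ Finset.range ρ, (h⁻¹ - (j : ℂ))))
        * (∏ k, ((T k).factorial : ℝ)) * (∏ k, ((Q k).choose (T k) : ℝ))
        * (∏ k, ((R k).choose (T k) : ℝ))
        * r ^ (N - 2 * ∑ k, T k)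
      ≤ (4 * C / c) ^ (q + ρ) * r ^ N := by
    intro T hT
    rw [Finset.mem_Iic] at hT
    have hTk : ∀ k, T k ≤ min (Q k) (R k) := fun k => hT k
    set t := ∑ k, T k with ht
    have htq : t ≤ q := Finset.sum_le_sum fun k _ => (hTk k).trans (min_le_left _ _)
    have htρ : t ≤ ρ := Finset.sum_le_sum fun k _ => (hTk k).trans (min_le_right _ _)
    have hm : ∑ k, (Q k + R k - T k) = q + ρ - t := by
      rw [Finset.sum_tsub_distrib _
        (fun k _ => (hTk k).trans ((min_le_left _ _).trans (Nat.le_add_right _ _)))]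
      simp [hq, hρ, ht, Finset.sum_add_distrib]
    rw [hm]
    set m := q + ρ - t with hmdef
    have hmle : m ≤ q + ρ := Nat.sub_le _ _
    have hD1 : (0:ℝ) < norm (∏ j ∈ Finset.range q, (h⁻¹ - (j : ℂ))) :=
      lt_of_lt_of_le (by positivity) (hlow h hh q)
    have hD2 : (0:ℝ) < norm (∏ j ∈ Finset.range ρ, (h⁻¹ - (j : ℂ))) :=
      lt_of_lt_of_le (by positivity) (hlow h hh ρ)
    have hfrac : norm (∏ j ∈ Finset.range m, (h⁻¹ - (j : ℂ)))
          / (norm (∏ j ∈ Finset.range q, (h⁻¹ - (j : ℂ)))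
              * norm (∏ j ∈ Finset.range ρ, (h⁻¹ - (j : ℂ))))
        ≤ (C ^ m * m.factorial) / (c ^ q * q.factorial * (c ^ ρ * ρ.factorial)) := by
      apply div_le_div₀ (by positivity) (hhigh h hh m) (by positivity)
      exact mul_le_mul (hlow h hh q) (hlow h hh ρ) (by positivity) hD1.le
    have hfact : (∏ k, ((T k).factorial : ℝ)) ≤ (t.factorial : ℝ) := by
      exact_mod_cast Nat.cast_le.mpr (Nat.le_of_dvd (Nat.factorial_pos t)
        (Nat.prod_factorial_dvd_factorial_sum _ _))
    have hchQ : (∏ k, ((Q k).choose (T k) : ℝ)) ≤ (2:ℝ) ^ q := by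
      have h1 : (∏ k, (Q k).choose (T k)) ≤ ∏ k, 2 ^ (Q k) :=
        Finset.prod_le_prod' fun k _ => aux_choose_le_two_pow _ _
      have h2 : (∏ k : Fin (n+1), 2 ^ (Q k)) = 2 ^ q := Finset.prod_pow_eq_pow_sum _ _ _
      calc (∏ k, ((Q k).choose (T k) : ℝ)) = ((∏ k, (Q k).choose (T k) : ℕ) : ℝ) := by
            push_cast; ring
        _ ≤ ((2:ℕ) ^ q : ℝ) := by exact_mod_cast h2 ▸ h1
        _ = (2:ℝ) ^ q := by push_cast; ring
    have hchR : (∏ k, ((R k).choose (T k) : ℝ)) ≤ (2:ℝ) ^ ρ := by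
      have h1 : (∏ k, (R k).choose (T k)) ≤ ∏ k, 2 ^ (R k) :=
        Finset.prod_le_prod' fun k _ => aux_choose_le_two_pow _ _
      have h2 : (∏ k : Fin (n+1), 2 ^ (R k)) = 2 ^ ρ := Finset.prod_pow_eq_pow_sum _ _ _
      calc (∏ k, ((R k).choose (T k) : ℝ)) = ((∏ k, (R k).choose (T k) : ℕ) : ℝ) := by
            push_cast; ring
        _ ≤ ((2:ℕ) ^ ρ : ℝ) := by exact_mod_cast h2 ▸ h1
        _ = (2:ℝ) ^ ρ := by push_cast; ring
    have hrpow : r ^ (N - 2 * t) ≤ r ^ N := pow_le_pow_right₀ hr (Nat.sub_le _ _)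
    have step1 : norm (∏ j ∈ Finset.range m, (h⁻¹ - (j : ℂ)))
          / (norm (∏ j ∈ Finset.range q, (h⁻¹ - (j : ℂ)))
              * norm (∏ j ∈ Finset.range ρ, (h⁻¹ - (j : ℂ))))
        * (∏ k, ((T k).factorial : ℝ)) * (∏ k, ((Q k).choose (T k) : ℝ))
        * (∏ k, ((R k).choose (T k) : ℝ)) * r ^ (N - 2 * t)
        ≤ (C ^ m * m.factorial) / (c ^ q * q.factorial * (c ^ ρ * ρ.factorial))
          * (t.factorial : ℝ) * (2:ℝ) ^ q * (2:ℝ) ^ ρ * r ^ N := by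
      gcongr <;> positivity
    refine step1.trans ?_
    have hnum : C ^ m * (m.factorial : ℝ) * (t.factorial : ℝ)
        ≤ C ^ (q + ρ) * ((2:ℝ) ^ (q + ρ) * ((q.factorial : ℝ) * (ρ.factorial : ℝ))) := by
      have hmf : (m.factorial : ℝ) * (t.factorial : ℝ)
          ≤ (2:ℝ) ^ (q + ρ) * ((q.factorial : ℝ) * (ρ.factorial : ℝ)) := by
        have h1 : m.factorial * t.factorial ∣ (m + t).factorial :=
          Nat.factorial_mul_factorial_dvd_factorial_add m t
        have hmt : m + t = q + ρ := by omega
        rw [hmt] at h1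
        have h2 : m.factorial * t.factorial ≤ (q + ρ).factorial :=
          Nat.le_of_dvd (Nat.factorial_pos _) h1
        have h3 : (q + ρ).factorial ≤ 2 ^ (q + ρ) * (q.factorial * ρ.factorial) := by
          have h4 : (q + ρ).choose q * q.factorial * ((q + ρ) - q).factorial
              = (q + ρ).factorial := Nat.choose_mul_factorial_mul_factorial (Nat.le_add_right q ρ)
          rw [Nat.add_sub_cancel_left] at h4
          calc (q + ρ).factorial = (q + ρ).choose q * q.factorial * ρ.factorial := h4.symm
            _ ≤ 2 ^ (q + ρ) * q.factorial * ρ.factorial := by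
                exact Nat.mul_le_mul_right _ (Nat.mul_le_mul_right _ (aux_choose_le_two_pow _ _))
            _ = 2 ^ (q + ρ) * (q.factorial * ρ.factorial) := by ring
        exact_mod_cast h2.trans h3
      calc C ^ m * (m.factorial : ℝ) * (t.factorial : ℝ)
          ≤ C ^ (q + ρ) * ((m.factorial : ℝ) * (t.factorial : ℝ)) := by
            rw [mul_assoc]
            exact mul_le_mul_of_nonneg_right (pow_le_pow_right₀ hC hmle) (by positivity)
        _ ≤ C ^ (q + ρ) * ((2:ℝ) ^ (q + ρ) * ((q.factorial : ℝ) * (ρ.factorial : ℝ))) := by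
            exact mul_le_mul_of_nonneg_left hmf (by positivity)
    calc (C ^ m * m.factorial) / (c ^ q * q.factorial * (c ^ ρ * ρ.factorial))
          * (t.factorial : ℝ) * (2:ℝ) ^ q * (2:ℝ) ^ ρ * r ^ N
        = (C ^ m * (m.factorial : ℝ) * (t.factorial : ℝ))
            / (c ^ q * q.factorial * (c ^ ρ * ρ.factorial))
            * ((2:ℝ) ^ q * (2:ℝ) ^ ρ * r ^ N) := by ring
      _ ≤ (C ^ (q + ρ) * ((2:ℝ) ^ (q + ρ) * ((q.factorial : ℝ) * (ρ.factorial : ℝ))))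
            / (c ^ q * q.factorial * (c ^ ρ * ρ.factorial))
            * ((2:ℝ) ^ q * (2:ℝ) ^ ρ * r ^ N) := by
          gcongr
      _ = (4 * C / c) ^ (q + ρ) * r ^ N := by
          have hq0 : (0:ℝ) < (q.factorial : ℝ) := by positivity
          have hρ0 : (0:ℝ) < (ρ.factorial : ℝ) := by positivity
          have h4 : ((4 * C / c : ℝ)) ^ (q + ρ) = 4 ^ (q + ρ) * C ^ (q + ρ) / c ^ (q + ρ) := by
            rw [div_pow, mul_pow]
          rw [h4, ← htwo q ρ, pow_add c]
          field_simp
  -- sum over all T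
  have hcard : (Finset.Iic (fun k => min (Q k) (R k) : Fin (n + 1) → ℕ)).card ≤ 2 ^ (q + ρ) := by
    rw [Pi.card_Iic]
    calc (∏ k : Fin (n+1), (Finset.Iic (min (Q k) (R k))).card)
        = ∏ k : Fin (n+1), (min (Q k) (R k) + 1) := by
          simp [Nat.card_Iic]
      _ ≤ ∏ k : Fin (n+1), 2 ^ (Q k) :=
          Finset.prod_le_prod' fun k _ => by
            calc min (Q k) (R k) + 1 ≤ Q k + 1 := by omega
              _ ≤ 2 ^ (Q k) := Nat.succ_le_of_lt Nat.lt_two_pow_self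
      _ = 2 ^ q := Finset.prod_pow_eq_pow_sum _ _ _
      _ ≤ 2 ^ (q + ρ) := Nat.pow_le_pow_right (by norm_num) (Nat.le_add_right _ _)
  calc ∑ T ∈ Finset.Iic (fun k => min (Q k) (R k) : Fin (n + 1) → ℕ),
      norm (∏ j ∈ Finset.range (∑ k, (Q k + R k - T k)), (h⁻¹ - (j : ℂ)))
          / (norm (∏ j ∈ Finset.range q, (h⁻¹ - (j : ℂ)))
              * norm (∏ j ∈ Finset.range ρ, (h⁻¹ - (j : ℂ))))
        * (∏ k, ((T k).factorial : ℝ)) * (∏ k, ((Q k).choose (T k) : ℝ))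
        * (∏ k, ((R k).choose (T k) : ℝ))
        * r ^ (N - 2 * ∑ k, T k)
      ≤ (Finset.Iic (fun k => min (Q k) (R k) : Fin (n + 1) → ℕ)).card
          • ((4 * C / c) ^ (q + ρ) * r ^ N) := Finset.sum_le_card_nsmul _ _ _ key
    _ = ((Finset.Iic (fun k => min (Q k) (R k) : Fin (n + 1) → ℕ)).card : ℝ)
          * ((4 * C / c) ^ (q + ρ) * r ^ N) := nsmul_eq_mul _ _
    _ ≤ (2:ℝ) ^ (q + ρ) * ((4 * C / c) ^ (q + ρ) * r ^ N) := by
        have : ((Finset.Iic (fun k => min (Q k) (R k) : Fin (n + 1) → ℕ)).card : ℝ)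
            ≤ (2:ℝ) ^ (q + ρ) := by exact_mod_cast hcard
        exact mul_le_mul_of_nonneg_right this (by positivity)
    _ = (8 * C / c) ^ (q + ρ) * r ^ N := by
        rw [← mul_assoc, ← mul_pow]
        congr 2
        field_simp; ring
    _ ≤ (8 * C / c) ^ N * r ^ N := by
        apply mul_le_mul_of_nonneg_right _ (by positivity)
        apply pow_le_pow_right₀ _ (by omega)
        rw [le_div_iff₀ hc0]
        nlinarith
    _ = (8 * c⁻¹ * C * r) ^ N := by
        rw [← mul_pow]
        congr 1
        field_simp
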